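/- For A-bounded operators T, S, the infimum inf_{γ∈ℂ} ‖T + γS‖_A is attained: there exists ζ₀ ∈ ℂ with ‖T + ζ₀S‖_A = inf_{γ∈ℂ} ‖T + γS‖_A. -/

import Mathlib

noncomputable section

open Filter Topology

variable {H : Type*} [NormedAddCommGroup H] [InnerProductSpace ℂ H]

/-- The semi-inner product induced by `A`: `⟨x, y⟩_A = ⟨A x, y⟩`. -/
def innerA (A : H →L[ℂ] H) (x y : H) : ℂ := @inner ℂ _ _ (A x) y

/-- The seminorm induced by `A`: `‖x‖_A = √⟨A x, x⟩`. -/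
def normA (A : H →L[ℂ] H) (x : H) : ℝ := Real.sqrt (innerA A x x).re

/-- The operator seminorm induced by `A`. -/
def opNormA (A T : H →L[ℂ] H) : ℝ :=
  sSup {r : ℝ | ∃ x : H, normA A x = 1 ∧ r = normA A (T x)}

/-- `T` is `A`-bounded. -/
def ABounded (A T : H →L[ℂ] H) : Prop :=
  ∃ c > 0, ∀ x : H, normA A (T x) ≤ c * normA A x

section Aux
variable [CompleteSpace H]

lemma innerA_self_nonneg {A : H →L[ℂ] H} (hA : A.IsPositive) (x : H) :
    0 ≤ (innerA A x x).re := by simpa [innerA] using (Complex.nonneg_iff.mp (hA.inner_nonneg_left x)).1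

lemma normA_nonneg (A : H →L[ℂ] H) (x : H) : 0 ≤ normA A x := Real.sqrt_nonneg _

lemma normA_sq {A : H →L[ℂ] H} (hA : A.IsPositive) (x : H) :
    normA A x ^ 2 = (innerA A x x).re := Real.sq_sqrt (innerA_self_nonneg hA x)

lemma normA_smul (A : H →L[ℂ] H) (c : ℂ) (x : H) :
    normA A (c • x) = ‖c‖ * normA A x := by
  unfold normA innerA
  rw [map_smul, inner_smul_left, inner_smul_right, ← mul_assoc, Complex.conj_mul',
    ← Complex.ofReal_pow, Complex.re_ofReal_mul, Real.sqrt_mul (by positivity), Real.sqrt_sq (norm_nonneg c)]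

lemma innerA_symm {A : H →L[ℂ] H} (hA : A.IsPositive) (x y : H) :
    innerA A y x = starRingEnd ℂ (innerA A x y) := by
  have hs := (ContinuousLinearMap.isSelfAdjoint_iff_isSymmetric.mp hA.isSelfAdjoint)
  unfold innerA
  rw [← inner_conj_symm]
  congr 1
  exact (hs x y).symm

lemma innerA_cs_aux {A : H →L[ℂ] H} (hA : A.IsPositive) (x y : H)
    (hre : innerA A x y = (‖innerA A x y‖ : ℂ)) :
    ‖innerA A x y‖ ≤ normA A x * normA A y := by
  set a := (innerA A x x).re with ha
  set b := (innerA A y y).re with hb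
  set r := ‖innerA A x y‖ with hr
  have hyx : innerA A y x = (r : ℂ) := by
    rw [innerA_symm hA, hre]; simp
  have key : ∀ t : ℝ, 0 ≤ b * (t * t) + (2 * r) * t + a := by
    intro t
    have h0 := innerA_self_nonneg hA (x + (t : ℂ) • y)
    have hexp : innerA A (x + (t:ℂ) • y) (x + (t:ℂ) • y)
        = innerA A x x + (t:ℂ) * innerA A x y + (t:ℂ) * innerA A y x
          + (t:ℂ) * (t:ℂ) * innerA A y y := by
      unfold innerA
      rw [map_add, map_smul]
      rw [inner_add_left, inner_add_right, inner_add_right, inner_smul_left,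
        inner_smul_right, inner_smul_left, inner_smul_right]
      push_cast
      ring_nf
      simp [Complex.conj_ofReal]
      ring
    rw [hexp, hre, hyx] at h0
    simp only [← Complex.ofReal_mul, Complex.add_re, Complex.mul_re,
      Complex.ofReal_re, Complex.ofReal_im] at h0
    rw [ha, hb]
    linarith
  have hd := discrim_le_zero key
  have hb0 : 0 ≤ b := innerA_self_nonneg hA y
  have ha0 : 0 ≤ a := innerA_self_nonneg hA x
  have hr0 : 0 ≤ r := norm_nonneg _
  have h2 : r ^ 2 ≤ a * b := by
    unfold discrim at hd; nlinarith
  calc r = Real.sqrt (r ^ 2) := (Real.sqrt_sq hr0).symm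
    _ ≤ Real.sqrt (a * b) := Real.sqrt_le_sqrt h2
    _ = normA A x * normA A y := by
        rw [Real.sqrt_mul ha0]; rfl

lemma innerA_cs {A : H →L[ℂ] H} (hA : A.IsPositive) (x y : H) :
    ‖innerA A x y‖ ≤ normA A x * normA A y := by
  classical
  set c := innerA A x y with hc
  by_cases h : c = 0
  · rw [h]; simp [mul_nonneg (normA_nonneg A x) (normA_nonneg A y)]
  · set u : ℂ := starRingEnd ℂ c / ‖c‖ with hu
    have hunorm : ‖u‖ = 1 := by
      rw [hu]; rw [norm_div]; simp [norm_ne_zero_iff.mpr h, h]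
    have huc : innerA A x (u • y) = (‖c‖ : ℂ) := by
      unfold innerA
      rw [inner_smul_right, hu]
      rw [div_mul_eq_mul_div]
      have hcc : @inner ℂ _ _ (A x) y = c := rfl
      have hne : (‖c‖ : ℂ) ≠ 0 := by simpa using norm_ne_zero_iff.mpr h
      rw [hcc, Complex.conj_mul', sq]
      field_simp
    have h2 := innerA_cs_aux hA x (u • y) (by rw [huc]; norm_num)
    rw [huc] at h2
    simp only [Complex.norm_real, Real.norm_eq_abs, abs_norm] at h2
    rw [normA_smul, hunorm, one_mul] at h2
    exact h2

lemma normA_add_le {A : H →L[ℂ] H} (hA : A.IsPositive) (x y : H) :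
    normA A (x + y) ≤ normA A x + normA A y := by
  have hexp : innerA A (x + y) (x + y)
      = innerA A x x + innerA A x y + innerA A y x + innerA A y y := by
    unfold innerA
    rw [map_add, inner_add_left, inner_add_right, inner_add_right]
    ring
  have h1 : (innerA A (x + y) (x + y)).re
      ≤ (normA A x + normA A y) ^ 2 := by
    rw [hexp]
    simp only [Complex.add_re]
    have hxy : (innerA A x y).re ≤ ‖innerA A x y‖ := Complex.re_le_norm _
    have hyx : (innerA A y x).re ≤ ‖innerA A x y‖ := by
      rw [innerA_symm hA]; simpa using Complex.re_le_norm _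
    have hcs := innerA_cs hA x y
    have := normA_sq hA x; have := normA_sq hA y
    nlinarith [normA_nonneg A x, normA_nonneg A y]
  calc normA A (x + y) = Real.sqrt (innerA A (x+y) (x+y)).re := rfl
    _ ≤ Real.sqrt ((normA A x + normA A y) ^ 2) := Real.sqrt_le_sqrt h1
    _ = normA A x + normA A y :=
        Real.sqrt_sq (add_nonneg (normA_nonneg A x) (normA_nonneg A y))

end Aux

theorem stmt12 [CompleteSpace H] (A T S : H →L[ℂ] H) (hA : A.IsPositive)
    (hT : ABounded A T) (hS : ABounded A S) :
    ∃ ζ₀ : ℂ, opNormA A (T + ζ₀ • S) = ⨅ γ : ℂ, opNormA A (T + γ • S) := by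
  classical
  obtain ⟨cT, hcT, hTb⟩ := hT
  obtain ⟨cS, hcS, hSb⟩ := hS
  by_cases hne : ∃ x : H, normA A x = 1
  case neg =>
    have hzero : ∀ U : H →L[ℂ] H, opNormA A U = 0 := by
      intro U
      unfold opNormA
      have : {r : ℝ | ∃ x : H, normA A x = 1 ∧ r = normA A (U x)} = ∅ := by
        ext r; simp only [Set.mem_setOf_eq, Set.mem_empty_iff_false, iff_false]
        rintro ⟨x, hx, -⟩
        exact hne ⟨x, hx⟩
      rw [this, Real.sSup_empty]
    refine ⟨0, ?_⟩
    rw [hzero]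
    have : ∀ γ : ℂ, opNormA A (T + γ • S) = 0 := fun γ => hzero _
    simp only [this]
    rw [ciInf_const]
  case pos =>
  obtain ⟨x₀, hx₀⟩ := hne
  set N : ℂ → ℝ := fun γ => opNormA A (T + γ • S) with hNdef
  -- basic set facts
  have happ : ∀ (γ : ℂ) (x : H), (T + γ • S) x = T x + γ • S x := by intro γ x; simp
  have hsetne : ∀ γ : ℂ,
      {r : ℝ | ∃ x : H, normA A x = 1 ∧ r = normA A ((T + γ • S) x)}.Nonempty :=
    fun γ => ⟨_, x₀, hx₀, rfl⟩
  have hbddN : ∀ γ : ℂ,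
      BddAbove {r : ℝ | ∃ x : H, normA A x = 1 ∧ r = normA A ((T + γ • S) x)} := by
    intro γ
    refine ⟨cT + ‖γ‖ * cS, ?_⟩
    rintro r ⟨x, hx, rfl⟩
    rw [happ]
    calc normA A (T x + γ • S x) ≤ normA A (T x) + normA A (γ • S x) :=
          normA_add_le hA _ _
      _ = normA A (T x) + ‖γ‖ * normA A (S x) := by rw [normA_smul]
      _ ≤ cT * normA A x + ‖γ‖ * (cS * normA A x) := by
          gcongr
          · exact hTb x
          · exact hSb x
      _ = cT + ‖γ‖ * cS := by rw [hx]; ring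
  have hbddS : BddAbove {r : ℝ | ∃ x : H, normA A x = 1 ∧ r = normA A (S x)} := by
    refine ⟨cS, ?_⟩
    rintro r ⟨x, hx, rfl⟩
    calc normA A (S x) ≤ cS * normA A x := hSb x
      _ = cS := by rw [hx, mul_one]
  have hbddT : BddAbove {r : ℝ | ∃ x : H, normA A x = 1 ∧ r = normA A (T x)} := by
    refine ⟨cT, ?_⟩
    rintro r ⟨x, hx, rfl⟩
    calc normA A (T x) ≤ cT * normA A x := hTb x
      _ = cT := by rw [hx, mul_one]
  set fS := opNormA A S with hfSdef
  set fT := opNormA A T with hfTdef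
  have hle : ∀ (γ : ℂ) (x : H), normA A x = 1 → normA A (T x + γ • S x) ≤ N γ := by
    intro γ x hx
    have := le_csSup (hbddN γ) (Set.mem_setOf_eq ▸ ⟨x, hx, rfl⟩ :
      normA A ((T + γ • S) x) ∈ _)
    rwa [happ] at this
  have hSle : ∀ x : H, normA A x = 1 → normA A (S x) ≤ fS :=
    fun x hx => le_csSup hbddS ⟨x, hx, rfl⟩
  have hTle : ∀ x : H, normA A x = 1 → normA A (T x) ≤ fT :=
    fun x hx => le_csSup hbddT ⟨x, hx, rfl⟩
  have hNnonneg : ∀ γ : ℂ, 0 ≤ N γ :=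
    fun γ => le_trans (normA_nonneg A _) (hle γ x₀ hx₀)
  have hfS0 : 0 ≤ fS := le_trans (normA_nonneg A _) (hSle x₀ hx₀)
  have hfT0 : 0 ≤ fT := le_trans (normA_nonneg A _) (hTle x₀ hx₀)
  have hbdd_range : BddBelow (Set.range N) := ⟨0, by rintro r ⟨γ, rfl⟩; exact hNnonneg γ⟩
  -- Lipschitz bound
  have hlip : ∀ γ γ' : ℂ, N γ ≤ N γ' + fS * ‖γ - γ'‖ := by
    intro γ γ'
    refine csSup_le (hsetne γ) ?_
    rintro r ⟨x, hx, rfl⟩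
    rw [happ]
    have hdecomp : T x + γ • S x = (T x + γ' • S x) + (γ - γ') • S x := by
      rw [sub_smul]; abel
    rw [hdecomp]
    calc normA A _ ≤ normA A (T x + γ' • S x) + normA A ((γ - γ') • S x) :=
          normA_add_le hA _ _
      _ = normA A (T x + γ' • S x) + ‖γ - γ'‖ * normA A (S x) := by rw [normA_smul]
      _ ≤ N γ' + fS * ‖γ - γ'‖ := by
          refine add_le_add (hle γ' x hx) ?_
          rw [mul_comm]
          exact mul_le_mul_of_nonneg_right (hSle x hx) (norm_nonneg _)
  have hcont : Continuous N := by
    refine LipschitzWith.continuous (K := Real.toNNReal fS) ?_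
    refine LipschitzWith.of_dist_le_mul fun γ γ' => ?_
    rw [Real.dist_eq, Real.coe_toNNReal _ hfS0]
    rw [abs_sub_le_iff]
    constructor
    · have := hlip γ γ'; rw [dist_eq_norm]; linarith
    · have := hlip γ' γ; rw [dist_eq_norm, ← norm_neg, neg_sub]; linarith
  -- coercivity
  have hcoer : ∀ γ : ℂ, fS * ‖γ‖ ≤ N γ + fT := by
    intro γ
    rcases eq_or_ne γ 0 with rfl | hγ0
    · simpa using add_nonneg (hNnonneg 0) hfT0
    · have hγn : (0:ℝ) < ‖γ‖ := norm_pos_iff.mpr hγ0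
      have key : ∀ x : H, normA A x = 1 → normA A (S x) ≤ (N γ + fT) / ‖γ‖ := by
        intro x hx
        rw [le_div_iff₀ hγn]
        have hdecomp : γ • S x = (T x + γ • S x) + (-1 : ℂ) • T x := by
          simp
        calc normA A (S x) * ‖γ‖ = ‖γ‖ * normA A (S x) := mul_comm _ _
          _ = normA A (γ • S x) := (normA_smul A γ (S x)).symm
          _ = normA A ((T x + γ • S x) + (-1 : ℂ) • T x) := by rw [← hdecomp]
          _ ≤ normA A (T x + γ • S x) + normA A ((-1 : ℂ) • T x) := normA_add_le hA _ _
          _ = normA A (T x + γ • S x) + normA A (T x) := by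
              rw [normA_smul]; norm_num
          _ ≤ N γ + fT := add_le_add (hle γ x hx) (hTle x hx)
      have : fS ≤ (N γ + fT) / ‖γ‖ := by
        refine csSup_le ⟨_, x₀, hx₀, rfl⟩ ?_
        rintro r ⟨x, hx, rfl⟩
        exact key x hx
      calc fS * ‖γ‖ ≤ ((N γ + fT) / ‖γ‖) * ‖γ‖ :=
            mul_le_mul_of_nonneg_right this hγn.le
        _ = N γ + fT := div_mul_cancel₀ _ hγn.ne'
  rcases le_or_gt fS 0 with hfS | hfS
  · -- fS = 0 : N is constant
    have hconst : ∀ γ : ℂ, N γ = N 0 := by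
      intro γ
      have hfSz : fS = 0 := le_antisymm hfS hfS0
      have h1 := hlip γ 0
      have h2 := hlip 0 γ
      rw [hfSz] at h1 h2
      simp at h1 h2
      linarith
    refine ⟨0, le_antisymm (le_ciInf fun γ => ?_) (ciInf_le hbdd_range 0)⟩
    rw [hconst γ]
  · -- fS > 0 : coercive, minimize on a compact ball
    set R : ℝ := (N 0 + fT) / fS + 1 with hRdef
    have hR0 : 0 ≤ R :=
      add_nonneg (div_nonneg (add_nonneg (hNnonneg 0) hfT0) hfS0) zero_le_one
    have hKne : (Metric.closedBall (0:ℂ) R).Nonempty := ⟨0, by simp [hR0]⟩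
    obtain ⟨ζ₀, hζK, hmin⟩ :=
      (isCompact_closedBall (0:ℂ) R).exists_isMinOn hKne hcont.continuousOn
    refine ⟨ζ₀, le_antisymm (le_ciInf fun γ => ?_) (ciInf_le hbdd_range ζ₀)⟩
    by_cases hγ : γ ∈ Metric.closedBall (0:ℂ) R
    · exact hmin hγ
    · have h1 : R < ‖γ‖ := by
        simp only [Metric.mem_closedBall, dist_zero_right, not_le] at hγ
        exact hγ
      have h2 := hcoer γ
      have h3 : N ζ₀ ≤ N 0 := hmin (by simp [hR0])
      have h4 : R * fS = N 0 + fT + fS := by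
        rw [hRdef]; field_simp
      nlinarith
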